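/- arXiv:math/9608215 — 3 statements merged into one kernel-verified Lean document; each statement's English description precedes it below -/
import Mathlib

section
/- Suppose (T₁, f₁) ∈ Q*, T₁ ≤_Q T₂, and either lim_{α(T₁)}((T₂)_{[<α(T₁)]}) \ (T₂)_{[α(T₁)]} is empty or its unique element does not belong to the range of f₁. Then there exists a function f₂ : T₂ → lim_{α(T₂)}(T₂) such that (T₁, f₁) ≤ (T₂, f₂) ∈ Q*, i.e., f₂ is a witness for T₂ satisfying f₁(η) ⊴ f₂(η) for all η ∈ T₁. -/
open Ordinal Set Cardinal

/-- A transfinite binary sequence: a length and values, zero beyond the length. -/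
structure BSeq where
  len : Ordinal.{0}
  val : Ordinal.{0} → Bool
  val_eq_false : ∀ β, len ≤ β → val β = false

namespace BSeq

/-- The empty sequence. -/
def nil : BSeq := ⟨0, fun _ => false, fun _ _ => rfl⟩

/-- Restriction `η↾β` of a sequence to length `β`. -/
noncomputable def restrict (η : BSeq) (β : Ordinal) : BSeq :=
  ⟨min η.len β, fun γ => if γ < β then η.val γ else false, by
    intro γ hγ
    rcases min_le_iff.mp hγ with h | h
    · by_cases hb : γ < β
      · simpa [hb] using η.val_eq_false γ h
      · simp [hb]
    · simp [not_lt.mpr h]⟩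

/-- `ν ⊴ η` : `ν` is an initial segment of `η`. -/
def IsInitSeg (ν η : BSeq) : Prop :=
  ν.len ≤ η.len ∧ ∀ β < ν.len, ν.val β = η.val β

/-- `ν ◁ η` : `ν` is a proper initial segment of `η`. -/
def IsStrictInitSeg (ν η : BSeq) : Prop :=
  ν.IsInitSeg η ∧ ν.len < η.len

/-- `η⌢⟨b⟩`, appending one bit. -/
noncomputable def snoc (η : BSeq) (b : Bool) : BSeq :=
  ⟨η.len + 1, fun β => if β = η.len then b else η.val β, by
    intro β hβ
    have h1 : η.len < β := by
      exact lt_of_lt_of_le (lt_add_one η.len) hβ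
    try simp only []
    rw [if_neg (ne_of_gt h1)]
    exact η.val_eq_false β h1.le⟩

end BSeq

/-- The level `T_{[β]} = T ∩ 2^β`. -/
def level (T : Set BSeq) (β : Ordinal) : Set BSeq := {η ∈ T | η.len = β}

/-- `T_{[<β]} = T ∩ 2^{<β}`. -/
def levelLT (T : Set BSeq) (β : Ordinal) : Set BSeq := {η ∈ T | η.len < β}

/-- `lim_δ(T) = {η ∈ 2^δ : ∀ β < δ, η↾β ∈ T}`. -/
def limAt (T : Set BSeq) (δ : Ordinal) : Set BSeq :=
  {η | η.len = δ ∧ ∀ β < δ, η.restrict β ∈ T}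

/-- `T ⊆ 2^{<α}` is an `α`-tree. -/
structure IsTree (α : Ordinal) (T : Set BSeq) : Prop where
  limit : Order.IsSuccLimit α
  len_lt : ∀ η ∈ T, η.len < α
  nil_mem : BSeq.nil ∈ T
  downClosed : ∀ ν η : BSeq, ν.IsStrictInitSeg η → η ∈ T → ν ∈ T
  succ_mem : ∀ η ∈ T, ∀ b : Bool, η.snoc b ∈ T
  ext_mem : ∀ η ∈ T, ∀ β, η.len ≤ β → β < α → ∃ ρ ∈ T, η.IsInitSeg ρ ∧ ρ.len = β

/-- `T` has true height `α`: every node lies on a cofinal branch through `T`. -/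
def TrueHeight (α : Ordinal) (T : Set BSeq) : Prop :=
  ∀ η ∈ T, ∃ ν : BSeq, ν.len = α ∧ η.IsStrictInitSeg ν ∧ ∀ β < α, ν.restrict β ∈ T

/-- A condition of the forcing `Q`: a tree of true height `α` (a limit ordinal)
omitting at most one limit point at each limit level. -/
structure IsCond (α : Ordinal) (T : Set BSeq) : Prop where
  tree : IsTree α T
  trueHeight : TrueHeight α T
  omits_le_one : ∀ δ < α, Order.IsSuccLimit δ → (limAt T δ \ level T δ).Subsingleton

/-- The end-extension order of `Q`. -/
def QLe (α₁ : Ordinal) (T₁ : Set BSeq) (α₂ : Ordinal) (T₂ : Set BSeq) : Prop :=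
  α₁ ≤ α₂ ∧ T₁ = levelLT T₂ α₁

/-- `f` is a witness for `T` (of height `α`). -/
def IsWitness (α : Ordinal) (T : Set BSeq) (f : BSeq → BSeq) : Prop :=
  ∀ η ∈ T, f η ∈ limAt T α ∧ η.IsStrictInitSeg (f η)

/-- The order of `Q^*`. -/
def QsLe (α₁ : Ordinal) (T₁ : Set BSeq) (f₁ : BSeq → BSeq)
    (α₂ : Ordinal) (T₂ : Set BSeq) (f₂ : BSeq → BSeq) : Prop :=
  QLe α₁ T₁ α₂ T₂ ∧ ∀ η ∈ T₁, (f₁ η).IsInitSeg (f₂ η)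

/-- `C` is a club (closed unbounded) subset of `μ`. -/
def IsClubIn (C : Set Ordinal) (μ : Ordinal) : Prop :=
  C ⊆ Set.Iio μ ∧
  (∀ δ < μ, Order.IsSuccLimit δ → (∀ β < δ, ∃ γ ∈ C, β < γ ∧ γ < δ) → δ ∈ C) ∧
  (∀ β < μ, ∃ γ ∈ C, β < γ ∧ γ < μ)

/-- `S` is stationary in `μ`. -/
def IsStationaryIn (S : Set Ordinal) (μ : Ordinal) : Prop :=
  ∀ C, IsClubIn C μ → (S ∩ C).Nonempty

/-- The set of accumulation points of a set of ordinals. -/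
def accPts (C : Set Ordinal) : Set Ordinal :=
  {β | 0 < β ∧ ∀ γ < β, ∃ δ ∈ C, γ < δ ∧ δ < β}

lemma BSeq.IsStrictInitSeg.trans' {a b c : BSeq} (h1 : a.IsStrictInitSeg b)
    (h2 : b.IsStrictInitSeg c) : a.IsStrictInitSeg c := by
  refine ⟨⟨h1.1.1.trans h2.1.1, fun β hβ => ?_⟩, h1.2.trans h2.2⟩
  rw [h1.1.2 β hβ, h2.1.2 β (hβ.trans_le h1.1.1)]

theorem stmt4 (α₁ α₂ : Ordinal) (T₁ T₂ : Set BSeq) (f₁ : BSeq → BSeq)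
    (h₁ : IsCond α₁ T₁) (h₂ : IsCond α₂ T₂) (hf₁ : IsWitness α₁ T₁ f₁)
    (hle : QLe α₁ T₁ α₂ T₂)
    (hstar : ∀ ν ∈ limAt (levelLT T₂ α₁) α₁ \ level T₂ α₁, ∀ η ∈ T₁, f₁ η ≠ ν) :
    ∃ f₂ : BSeq → BSeq, IsWitness α₂ T₂ f₂ ∧ ∀ η ∈ T₁, (f₁ η).IsInitSeg (f₂ η) := by
  classical
  obtain ⟨hαle, hT⟩ := hle
  have hT1sub : T₁ ⊆ T₂ := by
    intro η hη
    rw [hT] at hη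
    exact hη.1
  have key : ∀ η ∈ T₂, ∃ ν, ν ∈ limAt T₂ α₂ ∧ η.IsStrictInitSeg ν ∧
      (η ∈ T₁ → (f₁ η).IsInitSeg ν) := by
    intro η hη
    by_cases hη1 : η ∈ T₁
    · have hmem : f₁ η ∈ level T₂ α₁ := by
        by_contra hnot
        have hlim : f₁ η ∈ limAt (levelLT T₂ α₁) α₁ := by
          rw [← hT]; exact (hf₁ η hη1).1
        exact hstar (f₁ η) ⟨hlim, hnot⟩ η hη1 rfl
      obtain ⟨ν, hνlen, hνstrict, hνres⟩ := h₂.trueHeight (f₁ η) hmem.1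
      exact ⟨ν, ⟨hνlen, hνres⟩, (hf₁ η hη1).2.trans' hνstrict,
        fun _ => hνstrict.1⟩
    · obtain ⟨ν, hνlen, hνstrict, hνres⟩ := h₂.trueHeight η hη
      exact ⟨ν, ⟨hνlen, hνres⟩, hνstrict, fun h => absurd h hη1⟩
  refine ⟨fun η => if h : η ∈ T₂ then (key η h).choose else η, fun η hη => ?_, fun η hη => ?_⟩
  · simp only [dif_pos hη]
    exact ⟨(key η hη).choose_spec.1, (key η hη).choose_spec.2.1⟩
  · have hη2 := hT1sub hη
    simp only [dif_pos hη2]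
    exact (key η hη2).choose_spec.2.2 hη
end

section
/- Let ⟨(T_ζ, f_ζ) : ζ < ξ⟩ be a ≤-increasing sequence in Q* indexed by a limit ordinal ξ < λ, with α(T_{ζ₁}) < α(T_{ζ₂}) for ζ₁ < ζ₂. Set T_ξ = ⋃_{ζ<ξ} T_ζ and α = sup_{ζ<ξ} α(T_ζ), and for η ∈ T_ξ let f_ξ(η) = ⋃{ f_ζ(η) : ζ₀(η) ≤ ζ < ξ } where ζ₀(η) is least with η ∈ T_{ζ₀(η)}. Then (T_ξ, f_ξ) ∈ Q* and it is the least upper bound of the sequence in Q*. In particular, Q* is (<λ)-complete. -/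
open Ordinal Set Cardinal

theorem BSeq.ext' {η ν : BSeq} (h1 : η.len = ν.len) (h2 : ∀ β, η.val β = ν.val β) : η = ν := by
  obtain ⟨l1, v1, p1⟩ := η; obtain ⟨l2, v2, p2⟩ := ν
  simp only at h1 h2
  subst h1
  have hv : v1 = v2 := funext h2
  subst hv
  rfl

open Classical in
/-- The limit witness function: the union of the `f ζ`. -/
noncomputable def gval (ξ A : Ordinal) (a : Ordinal → Ordinal) (T : Ordinal → Set BSeq)
    (f : Ordinal → BSeq → BSeq) (η : BSeq) : BSeq :=
  ⟨A, fun β => if β < A ∧ ∃ ζ, ζ < ξ ∧ η ∈ T ζ ∧ (f ζ η).val β = true then true else false,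
    fun β hβ => if_neg (fun hc => absurd hc.1 (not_lt.mpr hβ))⟩

open Classical in
theorem gval_val_iff (ξ A : Ordinal) (a : Ordinal → Ordinal) (T : Ordinal → Set BSeq)
    (f : Ordinal → BSeq → BSeq) (η : BSeq) (β : Ordinal) :
    (gval ξ A a T f η).val β = true ↔
      (β < A ∧ ∃ ζ, ζ < ξ ∧ η ∈ T ζ ∧ (f ζ η).val β = true) := by
  simp only [gval]
  split <;> rename_i hsp <;> simp [hsp]

theorem stmt5 (lam : Cardinal) (hlam : lam.IsInaccessible)
    (ξ : Ordinal) (hξlim : Order.IsSuccLimit ξ) (hξ : ξ < lam.ord)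
    (a : Ordinal → Ordinal) (T : Ordinal → Set BSeq) (f : Ordinal → BSeq → BSeq)
    (hcond : ∀ ζ < ξ, IsCond (a ζ) (T ζ) ∧ IsWitness (a ζ) (T ζ) (f ζ) ∧ a ζ < lam.ord)
    (hmono : ∀ ζ₁ ζ₂, ζ₁ < ζ₂ → ζ₂ < ξ →
      QsLe (a ζ₁) (T ζ₁) (f ζ₁) (a ζ₂) (T ζ₂) (f ζ₂) ∧ a ζ₁ < a ζ₂) :
    IsCond (sSup (a '' Set.Iio ξ)) (⋃ ζ ∈ Set.Iio ξ, T ζ) ∧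
    ∃ g : BSeq → BSeq,
      IsWitness (sSup (a '' Set.Iio ξ)) (⋃ ζ ∈ Set.Iio ξ, T ζ) g ∧
      (∀ ζ < ξ, ∀ η ∈ T ζ, (f ζ η).IsInitSeg (g η)) ∧
      (∀ ζ < ξ,
        QsLe (a ζ) (T ζ) (f ζ) (sSup (a '' Set.Iio ξ)) (⋃ ζ ∈ Set.Iio ξ, T ζ) g) ∧
      ∀ (β : Ordinal) (S : Set BSeq) (h : BSeq → BSeq),
        IsCond β S → IsWitness β S h →
        (∀ ζ < ξ, QsLe (a ζ) (T ζ) (f ζ) β S h) →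
        QsLe (sSup (a '' Set.Iio ξ)) (⋃ ζ ∈ Set.Iio ξ, T ζ) g β S h := by
  classical
  set A := sSup (a '' Set.Iio ξ) with hA
  set U := ⋃ ζ ∈ Set.Iio ξ, T ζ with hU
  have hne : (a '' Set.Iio ξ).Nonempty := ⟨a 0, 0, hξlim.pos, rfl⟩
  have hbdd : BddAbove (a '' Set.Iio ξ) :=
    ⟨lam.ord, by rintro x ⟨ζ, hζ, rfl⟩; exact ((hcond ζ hζ).2.2).le⟩
  have hleA : ∀ ζ, ζ < ξ → a ζ ≤ A := fun ζ hζ => le_csSup hbdd ⟨ζ, hζ, rfl⟩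
  have hltA : ∀ β, β < A ↔ ∃ ζ, ζ < ξ ∧ β < a ζ := by
    intro β
    rw [hA, lt_csSup_iff hbdd hne]
    constructor
    · rintro ⟨x, ⟨ζ, hζ, rfl⟩, h⟩; exact ⟨ζ, hζ, h⟩
    · rintro ⟨ζ, hζ, h⟩; exact ⟨a ζ, ⟨ζ, hζ, rfl⟩, h⟩
  have hamono : ∀ ζ₁ ζ₂, ζ₁ ≤ ζ₂ → ζ₂ < ξ → a ζ₁ ≤ a ζ₂ := by
    intro ζ₁ ζ₂ h h₂
    rcases h.lt_or_eq with h | h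
    · exact (hmono ζ₁ ζ₂ h h₂).2.le
    · exact h ▸ le_refl _
  have hTmono : ∀ ζ₁ ζ₂, ζ₁ ≤ ζ₂ → ζ₂ < ξ → T ζ₁ ⊆ T ζ₂ := by
    intro ζ₁ ζ₂ h h₂
    rcases h.lt_or_eq with h | h
    · rw [(hmono ζ₁ ζ₂ h h₂).1.1.2]; exact fun η hη => hη.1
    · exact h ▸ subset_rfl
  have hmemU : ∀ η, η ∈ U ↔ ∃ ζ, ζ < ξ ∧ η ∈ T ζ := by
    intro η
    simp only [hU, Set.mem_iUnion, Set.mem_Iio, exists_prop]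
  have hdown : ∀ ζ, ζ < ξ → ∀ η, η ∈ U → η.len < a ζ → η ∈ T ζ := by
    intro ζ hζ η hη hlen
    obtain ⟨ζ', hζ', hη'⟩ := (hmemU η).1 hη
    rcases le_or_gt ζ' ζ with h | h
    · exact hTmono ζ' ζ h hζ hη'
    · rw [(hmono ζ ζ' h hζ').1.1.2]; exact ⟨hη', hlen⟩
  have hAlim : Order.IsSuccLimit A := by
    refine Ordinal.isSuccLimit_iff.2 ⟨?_, Order.isSuccPrelimit_of_succ_lt ?_⟩
    · exact (lt_of_lt_of_le (hcond 0 hξlim.pos).1.tree.limit.pos (hleA 0 hξlim.pos)).ne'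
    · intro β hβ
      obtain ⟨ζ, hζ, h⟩ := (hltA β).1 hβ
      exact lt_of_lt_of_le ((hcond ζ hζ).1.tree.limit.succ_lt h) (hleA ζ hζ)
  have hflen : ∀ ζ, ζ < ξ → ∀ η ∈ T ζ, (f ζ η).len = a ζ :=
    fun ζ hζ η hη => ((hcond ζ hζ).2.1 η hη).1.1
  -- consistency of the union witness
  have hgval : ∀ ζ, ζ < ξ → ∀ η ∈ T ζ, ∀ β, β < a ζ →
      (gval ξ A a T f η).val β = (f ζ η).val β := by
    intro ζ hζ η hη β hβ
    have hβA : β < A := lt_of_lt_of_le hβ (hleA ζ hζ)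
    cases hfv : (f ζ η).val β with
    | true => exact (gval_val_iff ξ A a T f η β).2 ⟨hβA, ζ, hζ, hη, hfv⟩
    | false =>
      have hnot : ¬ ((gval ξ A a T f η).val β = true) := by
        rw [gval_val_iff]
        rintro ⟨-, ζ', hζ', hη', hfv'⟩
        rcases lt_trichotomy ζ ζ' with h | h | h
        · have hinit := (hmono ζ ζ' h hζ').1.2 η hη
          have heq := hinit.2 β (by rw [hflen ζ hζ η hη]; exact hβ)
          rw [hfv, hfv'] at heq
          simp at heq
        · subst h
          rw [hfv] at hfv'
          simp at hfv'
        · have hinit := (hmono ζ' ζ h hζ).1.2 η hη'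
          by_cases hb : β < a ζ'
          · have heq := hinit.2 β (by rw [hflen ζ' hζ' η hη']; exact hb)
            rw [hfv', hfv] at heq
            simp at heq
          · have hz := (f ζ' η).val_eq_false β
              (by rw [hflen ζ' hζ' η hη']; exact not_lt.mp hb)
            rw [hz] at hfv'
            simp at hfv'
      exact Bool.eq_false_iff.mpr hnot
  have hgrestrict : ∀ ζ, ζ < ξ → ∀ η ∈ T ζ, ∀ β, β < A →
      (gval ξ A a T f η).restrict β ∈ U := by
    intro ζ hζ η hη β hβ
    obtain ⟨ζ', hζ', hβ'⟩ := (hltA β).1 hβ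
    have hm : max ζ ζ' < ξ := max_lt hζ hζ'
    have hηm : η ∈ T (max ζ ζ') := hTmono ζ _ (le_max_left _ _) hm hη
    have hβm : β < a (max ζ ζ') := lt_of_lt_of_le hβ' (hamono ζ' _ (le_max_right _ _) hm)
    have heq : (gval ξ A a T f η).restrict β = (f (max ζ ζ') η).restrict β := by
      apply BSeq.ext'
      · show min (gval ξ A a T f η).len β = min (f (max ζ ζ') η).len β
        have h1 : (gval ξ A a T f η).len = A := rfl
        rw [h1, hflen _ hm η hηm, min_eq_right hβ.le, min_eq_right hβm.le]
      · intro γ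
        show (if γ < β then (gval ξ A a T f η).val γ else false) =
          (if γ < β then (f (max ζ ζ') η).val γ else false)
        by_cases hγ : γ < β
        · simp only [if_pos hγ]
          exact hgval _ hm η hηm γ (lt_trans hγ hβm)
        · simp [hγ]
    rw [heq]
    exact (hmemU _).2 ⟨_, hm, ((hcond _ hm).2.1 η hηm).1.2 β hβm⟩
  have hgstrict : ∀ ζ, ζ < ξ → ∀ η ∈ T ζ,
      η.IsStrictInitSeg (gval ξ A a T f η) := by
    intro ζ hζ η hη
    have hlen : η.len < a ζ := (hcond ζ hζ).1.tree.len_lt η hη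
    have hlA : η.len < A := lt_of_lt_of_le hlen (hleA ζ hζ)
    refine ⟨⟨hlA.le, ?_⟩, hlA⟩
    intro β hβ
    rw [hgval ζ hζ η hη β (lt_trans hβ hlen)]
    exact ((hcond ζ hζ).2.1 η hη).2.1.2 β hβ
  have hginit : ∀ ζ, ζ < ξ → ∀ η ∈ T ζ,
      (f ζ η).IsInitSeg (gval ξ A a T f η) := by
    intro ζ hζ η hη
    refine ⟨?_, ?_⟩
    · show (f ζ η).len ≤ A
      rw [hflen ζ hζ η hη]; exact hleA ζ hζ
    · intro β hβ
      rw [hflen ζ hζ η hη] at hβ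
      exact (hgval ζ hζ η hη β hβ).symm
  have hgwit : IsWitness A U (gval ξ A a T f) := by
    intro η hη
    obtain ⟨ζ, hζ, hη'⟩ := (hmemU η).1 hη
    exact ⟨⟨rfl, fun β hβ => hgrestrict ζ hζ η hη' β hβ⟩, hgstrict ζ hζ η hη'⟩
  refine ⟨⟨⟨hAlim, ?_, ?_, ?_, ?_, ?_⟩, ?_, ?_⟩, gval ξ A a T f, hgwit, hginit, ?_, ?_⟩
  · -- len_lt
    intro η hη
    obtain ⟨ζ, hζ, hη'⟩ := (hmemU η).1 hη
    exact lt_of_lt_of_le ((hcond ζ hζ).1.tree.len_lt η hη') (hleA ζ hζ)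
  · -- nil_mem
    exact (hmemU _).2 ⟨0, hξlim.pos, (hcond 0 hξlim.pos).1.tree.nil_mem⟩
  · -- downClosed
    intro ν η hs hη
    obtain ⟨ζ, hζ, hη'⟩ := (hmemU η).1 hη
    exact (hmemU ν).2 ⟨ζ, hζ, (hcond ζ hζ).1.tree.downClosed ν η hs hη'⟩
  · -- succ_mem
    intro η hη b
    obtain ⟨ζ, hζ, hη'⟩ := (hmemU η).1 hη
    exact (hmemU _).2 ⟨ζ, hζ, (hcond ζ hζ).1.tree.succ_mem η hη' b⟩
  · -- ext_mem
    intro η hη β hβ1 hβ2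
    obtain ⟨ζ, hζ, hη'⟩ := (hmemU η).1 hη
    obtain ⟨ζ', hζ', hβ'⟩ := (hltA β).1 hβ2
    have hm : max ζ ζ' < ξ := max_lt hζ hζ'
    have hηm : η ∈ T (max ζ ζ') := hTmono ζ _ (le_max_left _ _) hm hη'
    have hβm : β < a (max ζ ζ') := lt_of_lt_of_le hβ' (hamono ζ' _ (le_max_right _ _) hm)
    obtain ⟨ρ, hρ, hinit, hlen⟩ := (hcond _ hm).1.tree.ext_mem η hηm β hβ1 hβm
    exact ⟨ρ, (hmemU ρ).2 ⟨_, hm, hρ⟩, hinit, hlen⟩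
  · -- trueHeight
    intro η hη
    obtain ⟨ζ, hζ, hη'⟩ := (hmemU η).1 hη
    exact ⟨gval ξ A a T f η, rfl, hgstrict ζ hζ η hη',
      fun β hβ => hgrestrict ζ hζ η hη' β hβ⟩
  · -- omits_le_one
    intro δ hδ hδlim
    obtain ⟨ζ, hζ, hδζ⟩ := (hltA δ).1 hδ
    apply ((hcond ζ hζ).1.omits_le_one δ hδζ hδlim).anti
    rintro η ⟨⟨hlen, hres⟩, hnl⟩
    refine ⟨⟨hlen, fun β hβ => ?_⟩, fun hc => hnl ⟨(hmemU η).2 ⟨ζ, hζ, hc.1⟩, hc.2⟩⟩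
    apply hdown ζ hζ _ (hres β hβ)
    show min η.len β < a ζ
    exact lt_of_le_of_lt (min_le_right _ _) (lt_trans hβ hδζ)
  · -- upper bound
    intro ζ hζ
    refine ⟨⟨hleA ζ hζ, ?_⟩, fun η hη => hginit ζ hζ η hη⟩
    ext η
    constructor
    · intro hη
      exact ⟨(hmemU η).2 ⟨ζ, hζ, hη⟩, (hcond ζ hζ).1.tree.len_lt η hη⟩
    · rintro ⟨hηU, hlen⟩
      exact hdown ζ hζ η hηU hlen
  · -- least upper bound
    intro β S h hS hW hub
    have hAβ : A ≤ β :=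
      csSup_le hne (by rintro x ⟨ζ, hζ, rfl⟩; exact (hub ζ hζ).1.1)
    have hUS : U = levelLT S A := by
      ext η
      constructor
      · intro hη
        obtain ⟨ζ, hζ, hη'⟩ := (hmemU η).1 hη
        have hl : η ∈ levelLT S (a ζ) := (hub ζ hζ).1.2 ▸ hη'
        exact ⟨hl.1, lt_of_lt_of_le hl.2 (hleA ζ hζ)⟩
      · rintro ⟨hηS, hlen⟩
        obtain ⟨ζ, hζ, hlt⟩ := (hltA η.len).1 hlen
        have hl : η ∈ T ζ := by rw [(hub ζ hζ).1.2]; exact ⟨hηS, hlt⟩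
        exact (hmemU η).2 ⟨ζ, hζ, hl⟩
    refine ⟨⟨hAβ, hUS⟩, ?_⟩
    intro η hη
    obtain ⟨ζ, hζ, hη'⟩ := (hmemU η).1 hη
    have hηS : η ∈ S := by
      have hl : η ∈ levelLT S (a ζ) := (hub ζ hζ).1.2 ▸ hη'
      exact hl.1
    refine ⟨?_, ?_⟩
    · show (gval ξ A a T f η).len ≤ (h η).len
      have h1 : (gval ξ A a T f η).len = A := rfl
      rw [h1, (hW η hηS).1.1]
      exact hAβ
    · intro γ hγ
      have hγA : γ < A := hγ
      obtain ⟨ζ', hζ', hγ'⟩ := (hltA γ).1 hγA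
      have hm : max ζ ζ' < ξ := max_lt hζ hζ'
      have hηm : η ∈ T (max ζ ζ') := hTmono ζ _ (le_max_left _ _) hm hη'
      have hγm : γ < a (max ζ ζ') := lt_of_lt_of_le hγ' (hamono ζ' _ (le_max_right _ _) hm)
      rw [hgval _ hm η hηm γ hγm]
      exact ((hub _ hm).2 η hηm).2 γ (by rw [hflen _ hm η hηm]; exact hγm)
end

section
/- Assume λ is strongly inaccessible. Then for every ordinal γ < λ and condition T ∈ Q, Player II has a winning strategy in the game G_γ(T, Q) of length γ in which at stage ξ Player I plays an open dense subset D_ξ of Q and Player II must play T_ξ ∈ D_ξ with T ≤_Q T_ξ and T_ζ ≤_Q T_ξ for all ζ < ξ; Player II wins if he always has a legal move. In particular Q is strategically γ-complete for every γ < λ. -/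
open Ordinal Set Cardinal

/-- A condition of the forcing notion `Q`, bundled with its height. -/
structure QCond where
  ht : Ordinal
  tree : Set BSeq
  cond : IsCond ht tree

/-- The order on `Q`. -/
def QCond.Le (p q : QCond) : Prop := QLe p.ht p.tree q.ht q.tree

/-- `D` is an open dense subset of the partial order `P`. -/
def DenseOpenIn (P D : Set QCond) : Prop :=
  D ⊆ P ∧ (∀ p ∈ P, ∃ q ∈ D, p.Le q) ∧
  ∀ p ∈ D, ∀ q ∈ P, p.Le q → q ∈ D

namespace BSeq

@[ext] lemma ext'_s8 {η ν : BSeq} (hlen : η.len = ν.len) (hval : ∀ β, η.val β = ν.val β) :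
    η = ν := by
  cases η; cases ν; simp_all; funext β; exact hval β

lemma restrict_len (η : BSeq) (β : Ordinal) : (η.restrict β).len = min η.len β := rfl

lemma restrict_val (η : BSeq) (β γ : Ordinal) :
    (η.restrict β).val γ = if γ < β then η.val γ else false := rfl

lemma restrict_of_len_le {η : BSeq} {β : Ordinal} (h : η.len ≤ β) : η.restrict β = η := by
  refine ext'_s8 (by simp [restrict_len, min_eq_left h]) fun γ => ?_
  by_cases hγ : γ < β
  · simp [restrict_val, hγ]
  · simp [restrict_val, hγ, η.val_eq_false γ (h.trans (not_lt.mp hγ))]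

lemma restrict_restrict (η : BSeq) {β γ : Ordinal} (h : β ≤ γ) :
    (η.restrict γ).restrict β = η.restrict β := by
  refine ext'_s8 ?_ fun δ => ?_
  · simp [restrict_len, min_assoc, min_eq_right h]
  · by_cases hδ : δ < β
    · simp [restrict_val, hδ, hδ.trans_le h]
    · simp [restrict_val, hδ]

lemma isInitSeg_refl (η : BSeq) : η.IsInitSeg η := ⟨le_rfl, fun _ _ => rfl⟩

lemma IsInitSeg.trans {η ν ρ : BSeq} (h1 : η.IsInitSeg ν) (h2 : ν.IsInitSeg ρ) :
    η.IsInitSeg ρ :=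
  ⟨h1.1.trans h2.1, fun β hβ => (h1.2 β hβ).trans (h2.2 β (hβ.trans_le h1.1))⟩

lemma IsStrictInitSeg.trans_isInitSeg {η ν ρ : BSeq} (h1 : η.IsStrictInitSeg ν)
    (h2 : ν.IsInitSeg ρ) : η.IsStrictInitSeg ρ :=
  ⟨h1.1.trans h2, h1.2.trans_le h2.1⟩

lemma IsInitSeg.trans_strict {η ν ρ : BSeq} (h1 : η.IsInitSeg ν)
    (h2 : ν.IsStrictInitSeg ρ) : η.IsStrictInitSeg ρ :=
  ⟨h1.trans h2.1, h1.1.trans_lt h2.2⟩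

lemma restrict_isInitSeg (η : BSeq) (β : Ordinal) : (η.restrict β).IsInitSeg η := by
  refine ⟨min_le_left _ _, fun γ hγ => ?_⟩
  have : γ < β := hγ.trans_le (min_le_right _ _)
  simp [restrict_val, this]

lemma IsInitSeg.eq_restrict {ν η : BSeq} (h : ν.IsInitSeg η) : ν = η.restrict ν.len := by
  refine ext'_s8 (by simp [restrict_len, min_eq_right h.1]) fun γ => ?_
  by_cases hγ : γ < ν.len
  · simp [restrict_val, hγ, h.2 γ hγ]
  · simp [restrict_val, hγ, ν.val_eq_false γ (not_lt.mp hγ)]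

lemma restrict_eq_restrict_of_initSeg {ν η : BSeq} (h : ν.IsInitSeg η) {β : Ordinal}
    (hβ : β ≤ ν.len) : ν.restrict β = η.restrict β := by
  rw [h.eq_restrict, restrict_restrict η hβ]

/-- Extension of `η` with `false`s to length `δ ≥ η.len`. -/
noncomputable def pad (η : BSeq) (δ : Ordinal) (h : η.len ≤ δ) : BSeq :=
  ⟨δ, η.val, fun β hβ => η.val_eq_false β (h.trans hβ)⟩

lemma pad_len (η : BSeq) (δ : Ordinal) (h : η.len ≤ δ) : (η.pad δ h).len = δ := rfl

lemma isInitSeg_pad (η : BSeq) (δ : Ordinal) (h : η.len ≤ δ) : η.IsInitSeg (η.pad δ h) :=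
  ⟨h, fun _ _ => rfl⟩

lemma restrict_pad (η : BSeq) {δ β : Ordinal} (h : η.len ≤ δ) (hβ : η.len ≤ β) :
    (η.pad δ h).restrict β = η.pad (min δ β) (le_min h hβ) := by
  refine ext'_s8 (by simp [restrict_len, pad_len]) fun γ => ?_
  by_cases hγ : γ < β
  · simp [restrict_val, hγ, pad]
  · simp [restrict_val, hγ, pad, η.val_eq_false γ (hβ.trans (not_lt.mp hγ))]

lemma restrict_pad_of_le (η : BSeq) {δ β : Ordinal} (h : η.len ≤ δ) (hβ : η.len ≤ β)
    (hβδ : β ≤ δ) : (η.pad δ h).restrict β = η.pad β hβ := by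
  rw [restrict_pad η h hβ]; congr 1; exact min_eq_right hβδ

lemma pad_self (η : BSeq) (h : η.len ≤ η.len) : η.pad η.len h = η := ext'_s8 rfl fun _ => rfl

lemma restrict_snoc (η : BSeq) (b : Bool) {β : Ordinal} (hβ : β ≤ η.len) :
    (η.snoc b).restrict β = η.restrict β := by
  refine ext'_s8 ?_ fun γ => ?_
  · show min (η.len + 1) β = min η.len β
    rw [min_eq_right (hβ.trans (le_of_lt (lt_add_one _))), min_eq_right hβ]
  · by_cases hγ : γ < β
    · have : γ ≠ η.len := ne_of_lt (hγ.trans_le hβ)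
      simp [restrict_val, hγ, snoc, this]
    · simp [restrict_val, hγ]

end BSeq
lemma QLe.refl {α : Ordinal} {T : Set BSeq} (h : IsTree α T) : QLe α T α T := by
  refine ⟨le_rfl, ?_⟩
  ext η; exact ⟨fun hη => ⟨hη, h.len_lt η hη⟩, fun hη => hη.1⟩

lemma QLe.trans {α₁ α₂ α₃ : Ordinal} {T₁ T₂ T₃ : Set BSeq}
    (h12 : QLe α₁ T₁ α₂ T₂) (h23 : QLe α₂ T₂ α₃ T₃) : QLe α₁ T₁ α₃ T₃ := by
  refine ⟨h12.1.trans h23.1, ?_⟩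
  rw [h12.2, h23.2]
  ext η
  simp only [levelLT, Set.mem_setOf_eq]
  exact ⟨fun hη => ⟨hη.1.1, hη.2⟩, fun hη => ⟨⟨hη.1, hη.2.trans_le h12.1⟩, hη.2⟩⟩

lemma QLe.subset {α₁ α₂ : Ordinal} {T₁ T₂ : Set BSeq} (h : QLe α₁ T₁ α₂ T₂) : T₁ ⊆ T₂ := by
  intro η hη; rw [h.2] at hη; exact hη.1

lemma QLe.mem_of_len_lt {α₁ α₂ : Ordinal} {T₁ T₂ : Set BSeq} (h : QLe α₁ T₁ α₂ T₂)
    {η : BSeq} (hη : η ∈ T₂) (hlen : η.len < α₁) : η ∈ T₁ := by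
  rw [h.2]; exact ⟨hη, hlen⟩

lemma QsLe.trans {α₁ α₂ α₃ : Ordinal} {T₁ T₂ T₃ : Set BSeq} {f₁ f₂ f₃ : BSeq → BSeq}
    (h12 : QsLe α₁ T₁ f₁ α₂ T₂ f₂) (h23 : QsLe α₂ T₂ f₂ α₃ T₃ f₃) :
    QsLe α₁ T₁ f₁ α₃ T₃ f₃ :=
  ⟨h12.1.trans h23.1, fun η hη => (h12.2 η hη).trans (h23.2 η (h12.1.subset hη))⟩

lemma limAt_congr {α δ : Ordinal} {T₁ T₂ : Set BSeq} (h : T₁ = levelLT T₂ α) (hδ : δ ≤ α) :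
    limAt T₁ δ = limAt T₂ δ := by
  ext η
  refine ⟨fun hη => ⟨hη.1, fun β hβ => ((h ▸ hη.2 β hβ : _)).1⟩, fun hη => ⟨hη.1, fun β hβ => ?_⟩⟩
  rw [h]
  refine ⟨hη.2 β hβ, ?_⟩
  have : (η.restrict β).len = min η.len β := rfl
  rw [this]
  exact (min_le_right _ _).trans_lt (hβ.trans_le hδ)

lemma level_congr {α δ : Ordinal} {T₁ T₂ : Set BSeq} (h : T₁ = levelLT T₂ α) (hδ : δ < α) :
    level T₁ δ = level T₂ δ := by
  ext η
  refine ⟨fun hη => ⟨(h ▸ hη.1 : _).1, hη.2⟩, fun hη => ⟨?_, hη.2⟩⟩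
  rw [h]; exact ⟨hη.1, hη.2 ▸ hδ⟩


open scoped Classical in
noncomputable def witnessOf (α : Ordinal) (T : Set BSeq) : BSeq → BSeq := fun η =>
  if h : ∃ ν : BSeq, ν.len = α ∧ η.IsStrictInitSeg ν ∧ ∀ β < α, ν.restrict β ∈ T
  then h.choose else BSeq.nil

lemma witnessOf_isWitness {α : Ordinal} {T : Set BSeq} (h : IsCond α T) :
    IsWitness α T (witnessOf α T) := by
  intro η hη
  have hex := h.trueHeight η hη
  classical
  rw [witnessOf, dif_pos hex]
  obtain ⟨h1, h2, h3⟩ := hex.choose_spec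
  exact ⟨⟨h1, h3⟩, h2⟩
namespace BSeq
lemma restrict_pad_left (η : BSeq) {δ β : Ordinal} (h : η.len ≤ δ) (hβ : β ≤ η.len) :
    (η.pad δ h).restrict β = η.restrict β := by
  refine ext'_s8 ?_ fun γ => rfl
  show min δ β = min η.len β
  rw [min_eq_right (hβ.trans h), min_eq_right hβ]
end BSeq

/-- The branch-completion of a condition `T`, a tree of height `α + ω` containing all
branches of `T` at level `α`. -/
def compTree (α : Ordinal) (T : Set BSeq) : Set BSeq :=
  T ∪ {η | η.restrict α ∈ limAt T α ∧ α ≤ η.len ∧ η.len < α + Ordinal.omega0}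

section Comp

variable {α : Ordinal} {T : Set BSeq}

lemma mem_compTree_of_limAt {b : BSeq} (hb : b ∈ limAt T α) : b ∈ compTree α T := by
  refine Or.inr ⟨?_, le_of_eq hb.1.symm, ?_⟩
  · rwa [BSeq.restrict_of_len_le (le_of_eq hb.1)]
  · rw [hb.1]
    simpa using (add_lt_add_left Ordinal.omega0_pos α)

lemma mem_T_of_compTree {η : BSeq} (hη : η ∈ compTree α T) (hlen : η.len < α) : η ∈ T := by
  rcases hη with hη | hη
  · exact hη
  · exact absurd hη.2.1 (not_le.mpr hlen)

lemma compTree_len_lt (h : IsTree α T) {η : BSeq} (hη : η ∈ compTree α T) :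
    η.len < α + Ordinal.omega0 := by
  rcases hη with hη | hη
  · exact (h.len_lt η hη).trans_le (le_self_add)
  · exact hη.2.2

lemma limit_le_of_lt_add_omega0 {α δ : Ordinal} (hα : Order.IsSuccLimit α) (hδ : Order.IsSuccLimit δ)
    (h : δ < α + Ordinal.omega0) : δ ≤ α := by
  by_contra hc
  push_neg at hc
  have : α + Ordinal.omega0 ≤ δ := by
    rw [Ordinal.add_le_iff_of_isSuccLimit Ordinal.isSuccLimit_omega0]
    intro b hb
    obtain ⟨n, rfl⟩ := Ordinal.lt_omega0.mp hb
    have key : ∀ n : ℕ, α + (n : Ordinal) < δ := by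
      intro n
      induction n with
      | zero => simpa using hc
      | succ m ih =>
        have : α + ((m+1 : ℕ) : Ordinal) = Order.succ (α + (m : Ordinal)) := by
          push_cast
          rw [← add_assoc, Ordinal.add_one_eq_succ]
        rw [this]
        exact hδ.succ_lt ih
    exact (key n).le
  exact absurd h (not_lt.mpr this)

theorem compTree_isTree (h : IsCond α T) : IsTree (α + Ordinal.omega0) (compTree α T) := by
  constructor
  · exact Ordinal.isSuccLimit_add α Ordinal.isSuccLimit_omega0
  · exact fun η hη => compTree_len_lt h.tree hη
  · exact Or.inl h.tree.nil_mem
  · -- downClosed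
    rintro ν η hνη (hη | ⟨hb, hge, hlt⟩)
    · exact Or.inl (h.tree.downClosed ν η hνη hη)
    · have hν : ν = η.restrict ν.len := hνη.1.eq_restrict
      rcases lt_trichotomy ν.len α with hcase | hcase | hcase
      · refine Or.inl ?_
        rw [hν, ← BSeq.restrict_restrict η hcase.le]
        exact hb.2 ν.len hcase
      · rw [hν, hcase]
        exact mem_compTree_of_limAt hb
      · refine Or.inr ⟨?_, hcase.le, hνη.2.trans hlt⟩
        rw [hν, BSeq.restrict_restrict η hcase.le]
        exact hb
  · -- succ_mem
    rintro η (hη | ⟨hb, hge, hlt⟩) b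
    · exact Or.inl (h.tree.succ_mem η hη b)
    · refine Or.inr ⟨?_, ?_, ?_⟩
      · rwa [BSeq.restrict_snoc η b hge]
      · exact hge.trans (le_of_lt (lt_add_one _))
      · show η.len + 1 < _
        rw [Ordinal.add_one_eq_succ]
        exact (Ordinal.isSuccLimit_add α Ordinal.isSuccLimit_omega0).succ_lt hlt
  · -- ext_mem
    rintro η (hη | ⟨hb, hge, hlt⟩) β hβ1 hβ2
    · by_cases hβα : β < α
      · obtain ⟨ρ, hρT, hseg, hlen⟩ := h.tree.ext_mem η hη β hβ1 hβα
        exact ⟨ρ, Or.inl hρT, hseg, hlen⟩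
      · obtain ⟨ν, hν1, hν2, hν3⟩ := h.trueHeight η hη
        have hνβ : ν.len ≤ β := hν1 ▸ not_lt.mp hβα
        refine ⟨ν.pad β hνβ, Or.inr ⟨?_, ?_, ?_⟩, hν2.1.trans (BSeq.isInitSeg_pad ν β hνβ), rfl⟩
        · rw [BSeq.restrict_pad_left ν hνβ (le_of_eq hν1.symm),
            BSeq.restrict_of_len_le (le_of_eq hν1)]
          exact ⟨hν1, hν3⟩
        · exact not_lt.mp hβα
        · exact hβ2
    · refine ⟨η.pad β hβ1, Or.inr ⟨?_, ?_, hβ2⟩,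
        BSeq.isInitSeg_pad η β hβ1, rfl⟩
      · rwa [BSeq.restrict_pad_left η hβ1 hge]
      · exact hge.trans hβ1

theorem compTree_trueHeight (h : IsCond α T) :
    TrueHeight (α + Ordinal.omega0) (compTree α T) := by
  have homega : α < α + Ordinal.omega0 := by
    simpa using (add_lt_add_left Ordinal.omega0_pos α)
  rintro η (hη | ⟨hb, hge, hlt⟩)
  · obtain ⟨b, hb1, hb2, hb3⟩ := h.trueHeight η hη
    have hblen : b.len ≤ α + Ordinal.omega0 := hb1 ▸ homega.le
    refine ⟨b.pad _ hblen, rfl, hb2.trans_isInitSeg (BSeq.isInitSeg_pad b _ hblen), ?_⟩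
    intro β hβ
    rcases lt_trichotomy β α with hc | hc | hc
    · rw [BSeq.restrict_pad_left b hblen (by rw [hb1]; exact hc.le)]
      exact Or.inl (hb3 β hc)
    · rw [BSeq.restrict_pad_left b hblen (by rw [hb1]; exact hc.le), hc,
        BSeq.restrict_of_len_le hb1.le]
      exact mem_compTree_of_limAt ⟨hb1, hb3⟩
    · rw [BSeq.restrict_pad_of_le b hblen (hb1.le.trans hc.le) hβ.le]
      refine Or.inr ⟨?_, by rw [BSeq.pad_len]; exact hc.le, by rw [BSeq.pad_len]; exact hβ⟩
      rw [BSeq.restrict_pad_left b (hb1.le.trans hc.le) hb1.ge,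
        BSeq.restrict_of_len_le hb1.le]
      exact ⟨hb1, hb3⟩
  · refine ⟨η.pad _ hlt.le, rfl, ⟨BSeq.isInitSeg_pad η _ hlt.le, hlt⟩, ?_⟩
    intro β hβ
    by_cases hβη : β ≤ η.len
    · rw [BSeq.restrict_pad_left η hlt.le hβη]
      rcases lt_trichotomy β α with hc | hc | hc
      · refine Or.inl ?_
        rw [← BSeq.restrict_restrict η hc.le]
        exact hb.2 β hc
      · rw [hc]; exact mem_compTree_of_limAt hb
      · refine Or.inr ⟨?_, ?_, ?_⟩
        · rw [BSeq.restrict_restrict η hc.le]; exact hb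
        · rw [BSeq.restrict_len, min_eq_right hβη]; exact hc.le
        · rw [BSeq.restrict_len, min_eq_right hβη]; exact hβ
    · push_neg at hβη
      rw [BSeq.restrict_pad_of_le η hlt.le hβη.le hβ.le]
      refine Or.inr ⟨?_, hge.trans hβη.le, by rw [BSeq.pad_len]; exact hβ⟩
      rwa [BSeq.restrict_pad_left η hβη.le hge]

theorem compTree_isCond (h : IsCond α T) : IsCond (α + Ordinal.omega0) (compTree α T) := by
  refine ⟨compTree_isTree h, compTree_trueHeight h, ?_⟩
  intro δ hδ hδlim
  have hδα : δ ≤ α := limit_le_of_lt_add_omega0 h.tree.limit hδlim hδ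
  rcases lt_or_eq_of_le hδα with hc | hc
  · have h1 : limAt (compTree α T) δ = limAt T δ := by
      ext η
      refine ⟨fun hη => ⟨hη.1, fun β hβ => ?_⟩, fun hη => ⟨hη.1, fun β hβ => Or.inl (hη.2 β hβ)⟩⟩
      refine mem_T_of_compTree (hη.2 β hβ) ?_
      rw [BSeq.restrict_len]
      exact (min_le_right _ _).trans_lt (hβ.trans_le hδα)
    have h2 : level (compTree α T) δ = level T δ := by
      ext η
      refine ⟨fun hη => ⟨mem_T_of_compTree hη.1 (hη.2 ▸ hc), hη.2⟩,
        fun hη => ⟨Or.inl hη.1, hη.2⟩⟩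
    rw [h1, h2]
    exact h.omits_le_one δ hc hδlim
  · have hemp : limAt (compTree α T) δ \ level (compTree α T) δ = ∅ := by
      ext η
      simp only [Set.mem_diff, Set.mem_empty_iff_false, iff_false, not_and, not_not]
      intro hη
      have hT : η ∈ limAt T δ := by
        refine ⟨hη.1, fun β hβ => ?_⟩
        refine mem_T_of_compTree (hη.2 β hβ) ?_
        rw [BSeq.restrict_len]
        exact ((min_le_right _ _).trans_lt hβ).trans_le hc.le
      rw [hc] at hT
      exact ⟨mem_compTree_of_limAt hT, hη.1⟩
    rw [hemp]
    exact fun a ha => absurd ha (Set.notMem_empty a)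

theorem compTree_qle (h : IsCond α T) : QLe α T (α + Ordinal.omega0) (compTree α T) := by
  refine ⟨le_self_add, ?_⟩
  ext η
  exact ⟨fun hη => ⟨Or.inl hη, h.tree.len_lt η hη⟩,
    fun hη => mem_T_of_compTree hη.1 hη.2⟩

end Comp
/-- A condition together with a (candidate) witness. -/
abbrev QPair := QCond × (BSeq → BSeq)

/-- A good pair: small height and genuine witness. -/
def GoodPair (lam : Cardinal) (P : QPair) : Prop :=
  P.1.ht < lam.ord ∧ IsWitness P.1.ht P.1.tree P.2

/-- The `Q^*` order on bundled pairs. -/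
def QPairLe (P P' : QPair) : Prop :=
  QsLe P.1.ht P.1.tree P.2 P'.1.ht P'.1.tree P'.2

lemma QPairLe.refl (P : QPair) : QPairLe P P :=
  ⟨QLe.refl P.1.cond.tree, fun η _ => BSeq.isInitSeg_refl _⟩

lemma QPairLe.trans {P P' P'' : QPair} (h : QPairLe P P') (h' : QPairLe P' P'') :
    QPairLe P P'' := QsLe.trans h h'

lemma exists_step {lam : Cardinal} (hlam : lam.IsInaccessible) (P : QPair)
    (hP : GoodPair lam P) (D : Set QCond)
    (hD : DenseOpenIn {p : QCond | p.ht < lam.ord} D) :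
    ∃ P' : QPair, GoodPair lam P' ∧ QPairLe P P' ∧ P'.1 ∈ D ∧ P.1.ht < P'.1.ht := by
  classical
  obtain ⟨⟨α, T, hcond⟩, f⟩ := P
  simp only [GoodPair] at hP ⊢
  set comp : QCond := ⟨α + Ordinal.omega0, compTree α T, compTree_isCond hcond⟩ with hcompdef
  have hcomp_lt : comp.ht < lam.ord := by
    show α + Ordinal.omega0 < lam.ord
    rw [Cardinal.lt_ord, Ordinal.card_add, Ordinal.card_omega0]
    exact Cardinal.add_lt_of_lt hlam.1.le (Cardinal.lt_ord.mp hP.1) hlam.1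
  obtain ⟨q, hqD, hle⟩ := hD.2.1 comp hcomp_lt
  have hq_lt : q.ht < lam.ord := hD.1 hqD
  set h : BSeq → BSeq := witnessOf q.ht q.tree with hhdef
  have hwit : IsWitness q.ht q.tree h := witnessOf_isWitness q.cond
  have hcq : QLe α T q.ht q.tree := (compTree_qle hcond).trans hle
  refine ⟨(q, fun η => if η ∈ T then h (f η) else h η), ⟨hq_lt, ?_⟩, ⟨hcq, ?_⟩, hqD, ?_⟩
  · intro η hηq
    by_cases hηT : η ∈ T
    · simp only [if_pos hηT]
      have hfη := hP.2 η hηT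
      have hfq : f η ∈ q.tree := hle.subset (mem_compTree_of_limAt hfη.1)
      have hw := hwit _ hfq
      exact ⟨hw.1, hfη.2.trans_isInitSeg hw.2.1⟩
    · simp only [if_neg hηT]
      exact hwit _ hηq
  · intro η hηT
    simp only [if_pos hηT]
    have hfq : f η ∈ q.tree := hle.subset (mem_compTree_of_limAt (hP.2 η hηT).1)
    exact (hwit _ hfq).2.1
  · exact lt_of_lt_of_le (lt_add_of_pos_right α Ordinal.omega0_pos) hle.1
lemma exists_union {lam : Cardinal} (hlam : lam.IsInaccessible) {ξ : Ordinal}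
    (hξlim : Order.IsSuccLimit ξ) (hξ : ξ < lam.ord) (g : Ordinal → QPair)
    (hgood : ∀ ζ < ξ, GoodPair lam (g ζ))
    (hchain : ∀ ζ₁ ζ₂, ζ₁ < ζ₂ → ζ₂ < ξ → QPairLe (g ζ₁) (g ζ₂))
    (hht : ∀ ζ₁ ζ₂, ζ₁ < ζ₂ → ζ₂ < ξ → (g ζ₁).1.ht < (g ζ₂).1.ht) :
    ∃ P : QPair, GoodPair lam P ∧ ∀ ζ < ξ, QPairLe (g ζ) P := by
  classical
  set al : Ordinal → Ordinal := fun ζ => (g ζ).1.ht with hal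
  set tr : Ordinal → Set BSeq := fun ζ => (g ζ).1.tree with htr
  set fw : Ordinal → BSeq → BSeq := fun ζ => (g ζ).2 with hfw
  have hwit : ∀ ζ < ξ, IsWitness (al ζ) (tr ζ) (fw ζ) := fun ζ hζ => (hgood ζ hζ).2
  have hflen : ∀ ζ, ζ < ξ → ∀ η ∈ tr ζ, (fw ζ η).len = al ζ :=
    fun ζ hζ η hη => ((hwit ζ hζ) η hη).1.1
  have halim : ∀ ζ < ξ, Order.IsSuccLimit (al ζ) := fun ζ hζ => (g ζ).1.cond.tree.limit
  -- the supremum of the heights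
  set αs : Ordinal := Ordinal.bsup ξ (fun ζ _ => al ζ) with hαs
  have hm7 : ∀ ζ < ξ, al ζ ≤ αs := fun ζ hζ => Ordinal.le_bsup _ ζ hζ
  have hAmono : ∀ ζ₁ ζ₂, ζ₁ ≤ ζ₂ → ζ₂ < ξ → al ζ₁ ≤ al ζ₂ := by
    intro ζ₁ ζ₂ h12 h2
    rcases eq_or_lt_of_le h12 with rfl | h12
    · exact le_rfl
    · exact (hht ζ₁ ζ₂ h12 h2).le
  have hm3 : ∀ ζ < ξ, al ζ < αs := by
    intro ζ hζ
    have hs : Order.succ ζ < ξ := hξlim.succ_lt hζ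
    exact lt_of_lt_of_le (hht ζ _ (Order.lt_succ ζ) hs) (hm7 _ hs)
  have hm4 : ∀ β < αs, ∃ ζ, ∃ _ : ζ < ξ, β < al ζ := by
    intro β hβ
    exact (Ordinal.lt_bsup _).mp hβ
  have hm5 : αs < lam.ord := by
    refine Cardinal.bsup_lt_ord_of_isRegular hlam.isRegular (Cardinal.lt_ord.mp hξ) ?_
    exact fun ζ hζ => (hgood ζ hζ).1
  have hm6 : Order.IsSuccLimit αs := by
    rw [Ordinal.isSuccLimit_iff]
    refine ⟨fun h0 => ?_, fun a ha => ?_⟩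
    · have h1 := hm3 0 hξlim.pos
      rw [h0] at h1
      exact not_lt_of_ge zero_le h1
    · 
      obtain ⟨ζ, hζ, haζ⟩ := hm4 a ha.lt
      have h := lt_of_lt_of_le ((halim ζ hζ).succ_lt haζ) (hm7 ζ hζ)
      rw [ha.succ_eq] at h
      exact lt_irrefl _ h
  -- the union tree
  set Ts : Set BSeq := {η | ∃ ζ, ∃ _ : ζ < ξ, η ∈ tr ζ} with hTs
  have hm1 : ∀ ζ₁ ζ₂, ζ₁ ≤ ζ₂ → ζ₂ < ξ → tr ζ₁ ⊆ tr ζ₂ := by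
    intro ζ₁ ζ₂ h12 h2
    rcases eq_or_lt_of_le h12 with rfl | h12
    · exact subset_rfl
    · exact (hchain ζ₁ ζ₂ h12 h2).1.subset
  have hm2 : ∀ η ∈ Ts, ∀ ζ < ξ, η.len < al ζ → η ∈ tr ζ := by
    rintro η ⟨ζ', hζ', hη⟩ ζ hζ hlen
    rcases le_total ζ' ζ with h | h
    · exact hm1 ζ' ζ h hζ hη
    · rcases eq_or_lt_of_le h with rfl | h
      · exact hη
      · exact (hchain ζ ζ' h hζ').1.mem_of_len_lt hη hlen
  have hm8 : ∀ ζ < ξ, tr ζ = levelLT Ts (al ζ) := by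
    intro ζ hζ
    ext η
    constructor
    · exact fun hη => ⟨⟨ζ, hζ, hη⟩, (g ζ).1.cond.tree.len_lt η hη⟩
    · exact fun hη => hm2 η hη.1 ζ hζ hη.2
  -- the union witness
  set fs : BSeq → BSeq := fun η =>
    ⟨αs, fun β => if h : ∃ ζ, ζ < ξ ∧ η ∈ tr ζ ∧ β < al ζ then (fw h.choose η).val β
      else false, by
        intro β hβ
        have hne : ¬ ∃ ζ, ζ < ξ ∧ η ∈ tr ζ ∧ β < al ζ := by
          rintro ⟨ζ, hζ, -, hβζ⟩
          exact absurd (hβζ.trans_le (hm7 ζ hζ)) (not_lt.mpr hβ)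
        exact dif_neg hne⟩ with hfs
  have hfs_len : ∀ η, (fs η).len = αs := fun η => rfl
  have hc1 : ∀ η, ∀ ζ < ξ, η ∈ tr ζ → ∀ β < al ζ, (fs η).val β = (fw ζ η).val β := by
    intro η ζ hζ hη β hβ
    have hex : ∃ ζ, ζ < ξ ∧ η ∈ tr ζ ∧ β < al ζ := ⟨ζ, hζ, hη, hβ⟩
    show (if h : ∃ ζ, ζ < ξ ∧ η ∈ tr ζ ∧ β < al ζ then (fw h.choose η).val β else false) = _
    rw [dif_pos hex]
    obtain ⟨hζ₀, hη₀, hβ₀⟩ := hex.choose_spec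
    set ζ₀ := hex.choose
    rcases lt_trichotomy ζ₀ ζ with h | rfl | h
    · exact ((hchain ζ₀ ζ h hζ).2 η hη₀).2 β ((hflen ζ₀ hζ₀ η hη₀).symm ▸ hβ₀)
    · rfl
    · exact (((hchain ζ ζ₀ h hζ₀).2 η hη).2 β ((hflen ζ hζ η hη).symm ▸ hβ)).symm
  have hc3 : ∀ η, ∀ ζ < ξ, η ∈ tr ζ → ∀ β ≤ al ζ, (fs η).restrict β = (fw ζ η).restrict β := by
    intro η ζ hζ hη β hβ
    refine BSeq.ext'_s8 ?_ fun γ => ?_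
    · rw [BSeq.restrict_len, BSeq.restrict_len, hfs_len, hflen ζ hζ η hη,
        min_eq_right (hβ.trans (hm7 ζ hζ)), min_eq_right hβ]
    · by_cases hγ : γ < β
      · rw [BSeq.restrict_val, BSeq.restrict_val, if_pos hγ, if_pos hγ]
        exact hc1 η ζ hζ hη γ (hγ.trans_le hβ)
      · rw [BSeq.restrict_val, BSeq.restrict_val, if_neg hγ, if_neg hγ]
  have hup : ∀ η ∈ Ts, ∀ β < αs, ∃ ζ, ζ < ξ ∧ η ∈ tr ζ ∧ β < al ζ := by
    rintro η ⟨ζ, hζ, hη⟩ β hβ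
    obtain ⟨ζ', hζ', hβ'⟩ := hm4 β hβ
    refine ⟨max ζ ζ', max_lt hζ hζ', hm1 ζ _ (le_max_left _ _) (max_lt hζ hζ') hη,
      hβ'.trans_le (hAmono ζ' _ (le_max_right _ _) (max_lt hζ hζ'))⟩
  have hc4 : ∀ η ∈ Ts, ∀ β < αs, (fs η).restrict β ∈ Ts := by
    intro η hη β hβ
    obtain ⟨ζ, hζ, hηζ, hβζ⟩ := hup η hη β hβ
    rw [hc3 η ζ hζ hηζ β hβζ.le]
    exact ⟨ζ, hζ, ((hwit ζ hζ) η hηζ).1.2 β hβζ⟩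
  have hfswit : ∀ η ∈ Ts, fs η ∈ limAt Ts αs ∧ η.IsStrictInitSeg (fs η) := by
    rintro η hη
    obtain ⟨ζ, hζ, hηζ⟩ := hη
    have hηlen : η.len < al ζ := (g ζ).1.cond.tree.len_lt η hηζ
    refine ⟨⟨rfl, fun β hβ => hc4 η ⟨ζ, hζ, hηζ⟩ β hβ⟩, ⟨⟨?_, ?_⟩, ?_⟩⟩
    · rw [hfs_len]; exact (hηlen.trans_le (hm7 ζ hζ)).le
    · intro β hβ
      rw [hc1 η ζ hζ hηζ β (hβ.trans hηlen)]
      exact ((hwit ζ hζ) η hηζ).2.1.2 β hβ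
    · rw [hfs_len]; exact hηlen.trans_le (hm7 ζ hζ)
  -- Ts is a tree
  have htree : IsTree αs Ts := by
    constructor
    · exact hm6
    · rintro η ⟨ζ, hζ, hη⟩
      exact ((g ζ).1.cond.tree.len_lt η hη).trans_le (hm7 ζ hζ)
    · exact ⟨0, hξlim.pos, (g 0).1.cond.tree.nil_mem⟩
    · rintro ν η hνη ⟨ζ, hζ, hη⟩
      exact ⟨ζ, hζ, (g ζ).1.cond.tree.downClosed ν η hνη hη⟩
    · rintro η ⟨ζ, hζ, hη⟩ b
      exact ⟨ζ, hζ, (g ζ).1.cond.tree.succ_mem η hη b⟩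
    · rintro η hη β hβ1 hβ2
      obtain ⟨ζ, hζ, hηζ, hβζ⟩ := hup η hη β hβ2
      obtain ⟨ρ, hρ, hseg, hlen⟩ := (g ζ).1.cond.tree.ext_mem η hηζ β hβ1 hβζ
      exact ⟨ρ, ⟨ζ, hζ, hρ⟩, hseg, hlen⟩
  have hth : TrueHeight αs Ts := by
    intro η hη
    obtain ⟨h1, h2⟩ := hfswit η hη
    exact ⟨fs η, hfs_len η, h2, fun β hβ => h1.2 β hβ⟩
  have homits : ∀ δ < αs, Order.IsSuccLimit δ → (limAt Ts δ \ level Ts δ).Subsingleton := by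
    intro δ hδ hδlim
    obtain ⟨ζ, hζ, hδζ⟩ := hm4 δ hδ
    rw [← limAt_congr (hm8 ζ hζ) hδζ.le, ← level_congr (hm8 ζ hζ) hδζ]
    exact (g ζ).1.cond.omits_le_one δ hδζ hδlim
  refine ⟨(⟨αs, Ts, htree, hth, homits⟩, fs), ⟨hm5, fun η hη => hfswit η hη⟩, ?_⟩
  intro ζ hζ
  refine ⟨⟨hm7 ζ hζ, hm8 ζ hζ⟩, fun η hη => ⟨?_, ?_⟩⟩
  · rw [hflen ζ hζ η hη, hfs_len]
    exact hm7 ζ hζ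
  · intro β hβ
    rw [hflen ζ hζ η hη] at hβ
    exact (hc1 η ζ hζ hη β hβ).symm
/-- The base pair: the starting condition with a chosen witness. -/
noncomputable def basePair (Tc : QCond) : QPair := (Tc, witnessOf Tc.ht Tc.tree)

lemma basePair_good {lam : Cardinal} {Tc : QCond} (hTc : Tc.ht < lam.ord) :
    GoodPair lam (basePair Tc) := ⟨hTc, witnessOf_isWitness Tc.cond⟩

open Classical in
/-- One step of the strategy: go into the dense set `D`. -/
noncomputable def stepPair (lam : Cardinal) (D : Set QCond) (P : QPair) : QPair :=
  if h : ∃ P', GoodPair lam P' ∧ QPairLe P P' ∧ P'.1 ∈ D ∧ P.1.ht < P'.1.ht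
  then h.choose else P

open Classical in
/-- An upper bound for all previous stages. -/
noncomputable def prevPair (lam : Cardinal) (Tc : QCond) (ξ : Ordinal)
    (g : Ordinal → QPair) : QPair :=
  if h : ∃ P, GoodPair lam P ∧ QPairLe (basePair Tc) P ∧ ∀ ζ < ξ, QPairLe (g ζ) P
  then h.choose else basePair Tc

/-- The strategy, defined by well-founded recursion. -/
noncomputable def recPair (lam : Cardinal) (Tc : QCond) :
    Ordinal → (Ordinal → Set QCond) → QPair :=
  WellFounded.fix Ordinal.lt_wf (fun ξ ih D =>
    stepPair lam (D ξ)
      (prevPair lam Tc ξ (fun ζ => if h : ζ < ξ then ih ζ h D else basePair Tc)))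

lemma recPair_eq (lam : Cardinal) (Tc : QCond) (ξ : Ordinal.{0}) (D : Ordinal → Set QCond) :
    recPair lam Tc ξ D = stepPair lam (D ξ)
      (prevPair lam Tc ξ
        (fun ζ => if h : ζ < ξ then recPair lam Tc ζ D else basePair Tc)) := by
  conv_lhs => rw [recPair]
  rw [WellFounded.fix_eq]
  rfl

lemma recPair_congr (lam : Cardinal) (Tc : QCond) (ξ : Ordinal.{0}) :
    ∀ D D' : Ordinal → Set QCond, (∀ ζ ≤ ξ, D ζ = D' ζ) →
      recPair lam Tc ξ D = recPair lam Tc ξ D' := by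
  induction ξ using Ordinal.induction with
  | h ξ ih =>
    intro D D' hDD
    rw [recPair_eq, recPair_eq, hDD ξ le_rfl]
    have h2 : (fun ζ => if h : ζ < ξ then recPair lam Tc ζ D else basePair Tc)
        = (fun ζ => if h : ζ < ξ then recPair lam Tc ζ D' else basePair Tc) := by
      funext ζ
      by_cases h : ζ < ξ
      · rw [dif_pos h, dif_pos h, ih ζ h D D' (fun ζ' hζ' => hDD ζ' (hζ'.trans h.le))]
      · rw [dif_neg h, dif_neg h]
    rw [h2]

lemma recPair_spec {lam : Cardinal} (hlam : lam.IsInaccessible) {γ : Ordinal}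
    (hγ : γ < lam.ord) {Tc : QCond} (hTc : Tc.ht < lam.ord)
    (D : Ordinal → Set QCond)
    (hD : ∀ ξ < γ, DenseOpenIn {p : QCond | p.ht < lam.ord} (D ξ)) :
    ∀ ξ < γ, GoodPair lam (recPair lam Tc ξ D) ∧
      QPairLe (basePair Tc) (recPair lam Tc ξ D) ∧
      (recPair lam Tc ξ D).1 ∈ D ξ ∧
      ∀ ζ < ξ, QPairLe (recPair lam Tc ζ D) (recPair lam Tc ξ D) ∧
        (recPair lam Tc ζ D).1.ht < (recPair lam Tc ξ D).1.ht := by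
  intro ξ
  induction ξ using Ordinal.induction with
  | h ξ ih =>
    intro hξγ
    set g : Ordinal → QPair :=
      fun ζ => if h : ζ < ξ then recPair lam Tc ζ D else basePair Tc with hg
    have hgval : ∀ ζ < ξ, g ζ = recPair lam Tc ζ D := fun ζ hζ => dif_pos hζ
    have hprev : ∃ P, GoodPair lam P ∧ QPairLe (basePair Tc) P ∧
        ∀ ζ < ξ, QPairLe (g ζ) P := by
      rcases Ordinal.zero_or_succ_or_isSuccLimit ξ with rfl | ⟨ζ₀, rfl⟩ | hlim
      · exact ⟨basePair Tc, basePair_good hTc, QPairLe.refl _,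
          fun ζ h => absurd h (not_lt_of_ge (zero_le (a := ζ)))⟩
      · have hζ₀ : ζ₀ < Order.succ ζ₀ := Order.lt_succ ζ₀
        have hζ₀γ : ζ₀ < γ := hζ₀.trans hξγ
        obtain ⟨IH1, IH2, IH3, IH4⟩ := ih ζ₀ hζ₀ hζ₀γ
        refine ⟨recPair lam Tc ζ₀ D, IH1, IH2, ?_⟩
        intro ζ hζ
        rw [hgval ζ hζ]
        rcases eq_or_lt_of_le (Order.lt_succ_iff.mp hζ) with rfl | hζ'
        · exact QPairLe.refl _
        · exact (IH4 ζ hζ').1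
      · obtain ⟨P, hP1, hP2⟩ := exists_union hlam hlim (hξγ.trans hγ)
          (fun ζ => recPair lam Tc ζ D)
          (fun ζ hζ => (ih ζ hζ (hζ.trans hξγ)).1)
          (fun ζ₁ ζ₂ h12 h2 => ((ih ζ₂ h2 (h2.trans hξγ)).2.2.2 ζ₁ h12).1)
          (fun ζ₁ ζ₂ h12 h2 => ((ih ζ₂ h2 (h2.trans hξγ)).2.2.2 ζ₁ h12).2)
        refine ⟨P, hP1, ?_, ?_⟩
        · exact ((ih 0 hlim.pos (hlim.pos.trans_le hξγ.le)).2.1).trans (hP2 0 hlim.pos)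
        · intro ζ hζ
          rw [hgval ζ hζ]
          exact hP2 ζ hζ
    have hpv : GoodPair lam (prevPair lam Tc ξ g) ∧
        QPairLe (basePair Tc) (prevPair lam Tc ξ g) ∧
        ∀ ζ < ξ, QPairLe (g ζ) (prevPair lam Tc ξ g) := by
      rw [prevPair, dif_pos hprev]
      exact hprev.choose_spec
    have hstepEx := exists_step hlam (prevPair lam Tc ξ g) hpv.1 (D ξ) (hD ξ hξγ)
    have hrec : recPair lam Tc ξ D = stepPair lam (D ξ) (prevPair lam Tc ξ g) :=
      recPair_eq lam Tc ξ D
    have hstep : GoodPair lam (recPair lam Tc ξ D) ∧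
        QPairLe (prevPair lam Tc ξ g) (recPair lam Tc ξ D) ∧
        (recPair lam Tc ξ D).1 ∈ D ξ ∧
        (prevPair lam Tc ξ g).1.ht < (recPair lam Tc ξ D).1.ht := by
      rw [hrec, stepPair, dif_pos hstepEx]
      exact hstepEx.choose_spec
    refine ⟨hstep.1, hpv.2.1.trans hstep.2.1, hstep.2.2.1, ?_⟩
    intro ζ hζ
    have hζpv : QPairLe (recPair lam Tc ζ D) (prevPair lam Tc ξ g) := by
      have := hpv.2.2 ζ hζ
      rwa [hgval ζ hζ] at this
    exact ⟨hζpv.trans hstep.2.1, lt_of_le_of_lt hζpv.1.1 hstep.2.2.2⟩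
theorem stmt8 (lam : Cardinal) (hlam : lam.IsInaccessible)
    (γ : Ordinal) (hγ : γ < lam.ord)
    (Tc : QCond) (hTc : Tc.ht < lam.ord) :
    ∃ σ : (Ordinal → Set QCond) → Ordinal → QCond,
      (∀ D D' : Ordinal → Set QCond, ∀ ξ < γ, (∀ ζ ≤ ξ, D ζ = D' ζ) → σ D ξ = σ D' ξ) ∧
      ∀ D : Ordinal → Set QCond,
        (∀ ξ < γ, DenseOpenIn {p : QCond | p.ht < lam.ord} (D ξ)) →
        ∀ ξ < γ, σ D ξ ∈ D ξ ∧ (σ D ξ).ht < lam.ord ∧ Tc.Le (σ D ξ) ∧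
          ∀ ζ < ξ, (σ D ζ).Le (σ D ξ) := by
  refine ⟨fun D ξ => (recPair lam Tc ξ D).1, ?_, ?_⟩
  · intro D D' ξ _ hagree
    show (recPair lam Tc ξ D).1 = (recPair lam Tc ξ D').1
    rw [recPair_congr lam Tc ξ D D' hagree]
  · intro D hD ξ hξ
    obtain ⟨h1, h2, h3, h4⟩ := recPair_spec hlam hγ hTc D hD ξ hξ
    exact ⟨h3, h1.1, h2.1, fun ζ hζ => (h4 ζ hζ).1.1⟩
end
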